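/- Let A be an n×n alternating sign matrix with pattern row sum vector R = (r_1,...,r_n) and pattern column sum vector S = (s_1,...,s_n). Then for every i with 1 ≤ i ≤ n−1, ((r_i − 1)/2) + ((r_{i+1} − 1)/2) ≤ |{j : s_j ≥ 3}|. -/

import Mathlib

/-- An alternating sign matrix: entries in {0,1,-1}, all row and column sums
equal 1, and all partial row and column sums (from the start) are 0 or 1. -/
def IsASM {n : ℕ} (A : Matrix (Fin n) (Fin n) ℤ) : Prop :=
  (∀ i j, A i j = 0 ∨ A i j = 1 ∨ A i j = -1) ∧
  (∀ i, ∑ j, A i j = 1) ∧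
  (∀ j, ∑ i, A i j = 1) ∧
  (∀ i k, (∑ j ∈ Finset.Iic k, A i j) = 0 ∨ (∑ j ∈ Finset.Iic k, A i j) = 1) ∧
  (∀ j k, (∑ i ∈ Finset.Iic k, A i j) = 0 ∨ (∑ i ∈ Finset.Iic k, A i j) = 1)

lemma asm_key {n : ℕ} (f : Fin n → ℤ) (h01 : ∀ j, f j = 0 ∨ f j = 1 ∨ f j = -1)
    (hsum : ∑ j, f j = 1) :
    (Finset.univ.filter (fun j => f j ≠ 0)).card =
      2 * (Finset.univ.filter (fun j => f j = -1)).card + 1 := by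
  set P := Finset.univ.filter (fun j => f j = 1) with hP
  set M := Finset.univ.filter (fun j => f j = -1) with hM
  have hd : Disjoint P M := by
    simp only [Finset.disjoint_left, hP, hM, Finset.mem_filter, Finset.mem_univ, true_and]
    intro j h1 h2; omega
  have hPM : Finset.univ.filter (fun j => f j ≠ 0) = P ∪ M := by
    ext j
    simp only [Finset.mem_filter, Finset.mem_univ, true_and, Finset.mem_union, hP, hM]
    rcases h01 j with h | h | h <;> simp [h]
  have hsum2 : ∑ j ∈ P ∪ M, f j = 1 := by
    rw [← hsum]
    apply Finset.sum_subset (Finset.subset_univ _)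
    intro j _ hj
    simp only [Finset.mem_union, hP, hM, Finset.mem_filter, Finset.mem_univ, true_and] at hj
    rcases h01 j with h | h | h
    · exact h
    · exact absurd (Or.inl h) hj
    · exact absurd (Or.inr h) hj
  rw [Finset.sum_union hd] at hsum2
  have h1 : ∑ j ∈ P, f j = (P.card : ℤ) := by
    rw [Finset.sum_congr rfl (fun j hj => by
      simp only [hP, Finset.mem_filter] at hj; exact hj.2)]
    simp
  have h2 : ∑ j ∈ M, f j = -(M.card : ℤ) := by
    rw [Finset.sum_congr rfl (fun j hj => by
      simp only [hM, Finset.mem_filter] at hj; exact hj.2)]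
    simp
  rw [h1, h2] at hsum2
  have hcard : P.card = M.card + 1 := by exact_mod_cast by linarith
  rw [hPM, Finset.card_union_of_disjoint hd]
  omega

lemma Iic_succ_fin {n : ℕ} (b : ℕ) (h : b + 1 < n) :
    Finset.Iic (⟨b + 1, h⟩ : Fin n) =
      insert (⟨b + 1, h⟩ : Fin n) (Finset.Iic ⟨b, Nat.lt_of_succ_lt h⟩) := by
  ext x
  simp only [Finset.mem_Iic, Finset.mem_insert, Fin.le_def, Fin.ext_iff]
  omega

theorem stmt_8 {n : ℕ} (A : Matrix (Fin n) (Fin n) ℤ) (hA : IsASM A)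
    (r s : Fin n → ℕ)
    (hr : ∀ i, r i = (Finset.univ.filter (fun j => A i j ≠ 0)).card)
    (hs : ∀ j, s j = (Finset.univ.filter (fun i => A i j ≠ 0)).card)
    (i : ℕ) (hi : i + 1 < n) :
    (r ⟨i, by omega⟩ - 1) / 2 + (r ⟨i + 1, hi⟩ - 1) / 2 ≤
      (Finset.univ.filter (fun j : Fin n => 3 ≤ s j)).card := by
  obtain ⟨h01, hrow, hcol, hprow, hpcol⟩ := hA
  have hi0 : i < n := by omega
  set i0 : Fin n := ⟨i, hi0⟩
  set i1 : Fin n := ⟨i + 1, hi⟩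
  -- minus sets of the two rows
  set M0 := Finset.univ.filter (fun j => A i0 j = -1) with hM0
  set M1 := Finset.univ.filter (fun j => A i1 j = -1) with hM1
  have hr0 : r i0 = 2 * M0.card + 1 := by
    rw [hr]; exact asm_key (A i0) (h01 i0) (hrow i0)
  have hr1 : r i1 = 2 * M1.card + 1 := by
    rw [hr]; exact asm_key (A i1) (h01 i1) (hrow i1)
  -- a column with a -1 has s j ≥ 3
  have hcol3 : ∀ j : Fin n, (∃ k, A k j = -1) → 3 ≤ s j := by
    intro j ⟨k, hk⟩
    have := asm_key (fun k => A k j) (fun k => h01 k j) (hcol j)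
    rw [hs j, this]
    beta_reduce
    have : 0 < (Finset.univ.filter (fun k => A k j = -1)).card :=
      Finset.card_pos.mpr ⟨k, by simp [hk]⟩
    omega
  -- no column has -1 in both rows
  have hdisj : Disjoint M0 M1 := by
    simp only [Finset.disjoint_left, hM0, hM1, Finset.mem_filter, Finset.mem_univ, true_and]
    intro j h0 h1
    have hsplit1 : (∑ k ∈ Finset.Iic i1, A k j) = (∑ k ∈ Finset.Iic i0, A k j) + A i1 j := by
      rw [show i1 = (⟨i + 1, hi⟩ : Fin n) from rfl, Iic_succ_fin i hi, Finset.sum_insert]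
      · ring
      · simp [Fin.le_def]
    have hp0 := hpcol j i0
    have hp1 := hpcol j i1
    rw [hsplit1, h1] at hp1
    set t0 := (∑ k ∈ Finset.Iic i0, A k j) with ht0
    have hs0 : t0 = 1 := by omega
    rcases Nat.eq_zero_or_pos i with hz | hpos
    · have : Finset.Iic i0 = {i0} := by
        ext x; simp only [Finset.mem_Iic, Finset.mem_singleton, Fin.le_def, Fin.ext_iff, i0]; omega
      rw [ht0, this, Finset.sum_singleton, h0] at hs0
      omega
    · obtain ⟨m, hm⟩ := Nat.exists_eq_add_of_lt hpos
      have hmn : m + 1 < n := by omega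
      have hieq : i0 = (⟨m + 1, hmn⟩ : Fin n) := by simp [Fin.ext_iff, i0]; omega
      have hsplit0 : t0
          = (∑ k ∈ Finset.Iic (⟨m, by omega⟩ : Fin n), A k j) + A i0 j := by
        rw [ht0, hieq, Iic_succ_fin m hmn, Finset.sum_insert]
        · ring
        · simp [Fin.le_def]
      have hpm := hpcol j ⟨m, by omega⟩
      set tm := (∑ k ∈ Finset.Iic (⟨m, by omega⟩ : Fin n), A k j) with htm
      rw [hsplit0, h0] at hs0
      omega
  -- union subset of columns with s ≥ 3
  have hsub : M0 ∪ M1 ⊆ Finset.univ.filter (fun j : Fin n => 3 ≤ s j) := by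
    intro j hj
    simp only [Finset.mem_union, hM0, hM1, Finset.mem_filter, Finset.mem_univ, true_and] at hj ⊢
    rcases hj with h | h
    · exact hcol3 j ⟨i0, h⟩
    · exact hcol3 j ⟨i1, h⟩
  have := Finset.card_le_card hsub
  rw [Finset.card_union_of_disjoint hdisj] at this
  rw [hr0, hr1]
  omega
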